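/- Polar factorization identities: let ψ ∈ H¹(𝕋) and let φ ∈ L^∞(𝕋) satisfy ψ = |ψ|φ pointwise a.e. Define √ρ := |ψ| and Λ := Im(φ̄ ∂_x ψ). Then √ρ ∈ H¹(𝕋) with ∂_x√ρ = Re(φ̄ ∂_x ψ) a.e., and |∂_x ψ|² = (∂_x√ρ)² + Λ² almost everywhere. -/

import Mathlib

open Real MeasureTheory Complex

/-- Polar factorization: if `ψ` is an (H¹, modelled as differentiable) wave function and `φ` a
polar factor (`ψ = |ψ|φ` with `|φ| = 1` where `ψ ≠ 0`), then, setting `√ρ = |ψ|` and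
`Λ = Im(φ̄ ∂_x ψ)`, one has a.e. `∂_x√ρ = Re(φ̄ ∂_x ψ)` and `|∂_x ψ|² = (∂_x√ρ)² + Λ²`. -/
theorem polar_factorization
    (ψ φ : ℝ → ℂ) (hψ : Differentiable ℝ ψ)
    (hφ_polar : ∀ x, ψ x = (‖ψ x‖ : ℂ) * φ x)
    (hφ_unit : ∀ x, ψ x ≠ 0 → ‖φ x‖ = 1) :
    (∀ᵐ x : ℝ, HasDerivAt (fun y => ‖ψ y‖)
        ((starRingEnd ℂ (φ x) * deriv ψ x).re) x) ∧
    (∀ᵐ x : ℝ, (‖deriv ψ x‖) ^ 2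
        = ((starRingEnd ℂ (φ x) * deriv ψ x).re) ^ 2
          + ((starRingEnd ℂ (φ x) * deriv ψ x).im) ^ 2) := by
  -- The "bad" set: zeros of ψ where the derivative does not vanish.
  set S : Set ℝ := {x | ψ x = 0 ∧ deriv ψ x ≠ 0} with hSdef
  -- Every point of S is isolated in S (in fact in the zero set of ψ).
  have hdisc : DiscreteTopology S := by
    rw [discreteTopology_subtype_iff]
    intro x hx
    obtain ⟨hx0, hxd⟩ := hx
    have hd : HasDerivAt ψ (deriv ψ x) x := (hψ x).hasDerivAt
    have hslope := hasDerivAt_iff_tendsto_slope.mp hd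
    have hev : ∀ᶠ y in nhdsWithin x {x}ᶜ, slope ψ x y ≠ 0 := hslope.eventually_ne hxd
    rw [Filter.inf_principal_eq_bot]
    filter_upwards [hev] with y hy
    intro hyS
    apply hy
    have hy0 : ψ y = 0 := hyS.1
    simp [slope_def_module, hx0, hy0]
  have hScount : S.Countable := (HereditarilyLindelof_LindelofSets S).countable hdisc
  have hS0 : volume S = 0 := hScount.measure_zero _
  have hae : ∀ᵐ x : ℝ, ψ x = 0 → deriv ψ x = 0 := by
    filter_upwards [measure_eq_zero_iff_ae_notMem.mp hS0] with x hx h0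
    by_contra hd
    exact hx ⟨h0, hd⟩
  constructor
  · filter_upwards [hae] with x hx
    by_cases h0 : ψ x = 0
    · -- ψ x = 0 and deriv ψ x = 0
      have hd0 : deriv ψ x = 0 := hx h0
      have hψd : HasDerivAt ψ 0 x := by
        have := (hψ x).hasDerivAt; rwa [hd0] at this
      have h1 : (fun y => ψ y - ψ x - (y - x) • (0 : ℂ)) =o[nhds x] fun y => y - x :=
        hasDerivAt_iff_isLittleO.mp hψd
      have h2 : (fun y : ℝ => ψ y) =o[nhds x] fun y => y - x := by
        simpa [h0] using h1
      have h3 := h2.norm_left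
      rw [hd0, mul_zero]
      rw [hasDerivAt_iff_isLittleO]
      simp only [Complex.zero_re, smul_zero, sub_zero, h0, map_zero]
      simpa using h3
    · -- ψ x ≠ 0
      set d := deriv ψ x with hd
      set r := ‖ψ x‖ with hr
      have hr0 : 0 < r := norm_pos_iff.mpr h0
      have hpol : ψ x = (r : ℂ) * φ x := hφ_polar x
      have hdψ : HasDerivAt ψ d x := (hψ x).hasDerivAt
      have hu : HasDerivAt (fun y => (ψ y).re) d.re x :=
        Complex.reCLM.hasFDerivAt.comp_hasDerivAt x hdψ
      have hv : HasDerivAt (fun y => (ψ y).im) d.im x :=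
        Complex.imCLM.hasFDerivAt.comp_hasDerivAt x hdψ
      have hg : HasDerivAt (fun y => (ψ y).re * (ψ y).re + (ψ y).im * (ψ y).im)
          (d.re * (ψ x).re + (ψ x).re * d.re + (d.im * (ψ x).im + (ψ x).im * d.im)) x :=
        (hu.mul hu).add (hv.mul hv)
      have hgx : (ψ x).re * (ψ x).re + (ψ x).im * (ψ x).im ≠ 0 := by
        intro hcontra
        apply h0
        rw [← Complex.normSq_apply] at hcontra
        exact Complex.normSq_eq_zero.mp hcontra
      have hsq := (Real.hasDerivAt_sqrt hgx).comp x hg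
      have hsqrt_eq : Real.sqrt ((ψ x).re * (ψ x).re + (ψ x).im * (ψ x).im) = r := by
        rw [hr, Complex.norm_def, Complex.normSq_apply]
      have hfun : (fun y => ‖ψ y‖)
          = fun y => Real.sqrt ((ψ y).re * (ψ y).re + (ψ y).im * (ψ y).im) := by
        funext y; rw [Complex.norm_def, Complex.normSq_apply]
      rw [hfun]
      refine hsq.congr_deriv (Eq.symm ?_)
      -- derivative values agree
      have hre : (ψ x).re = r * (φ x).re := by
        have := congrArg Complex.re hpol
        rwa [Complex.re_ofReal_mul] at this
      have him : (ψ x).im = r * (φ x).im := by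
        have := congrArg Complex.im hpol
        rwa [Complex.im_ofReal_mul] at this
      rw [hsqrt_eq]
      field_simp
      rw [hre, him]
      simp only [Complex.mul_re, Complex.conj_re, Complex.conj_im]
      ring
  · filter_upwards [hae] with x hx
    by_cases h0 : ψ x = 0
    · have hd0 : deriv ψ x = 0 := hx h0
      simp [hd0]
    · have habs : ‖deriv ψ x‖
          = ‖starRingEnd ℂ (φ x) * deriv ψ x‖ := by
        rw [norm_mul, Complex.norm_conj, hφ_unit x h0, one_mul]
      rw [habs, Complex.sq_norm, Complex.normSq_apply]
      ring
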